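/- Let X₁ and X₂ be metric spaces and equip X₁ × X₂ with the ℓ² product metric. Let (x₁, y₁) be a midpoint secure configuration in X₁ with finite midpoint blocking set B₁, and let (x₂, y₂) be a midpoint secure configuration in X₂ with finite midpoint blocking set B₂. Then the configuration ((x₁, x₂), (y₁, y₂)) is midpoint secure in X₁ × X₂, with finite midpoint blocking set (B₁ ∪ {x₁}) × (B₂ ∪ {x₂}). -/

import Mathlib

/-- A map `γ : ℝ → X` (viewed on `[0,1]`) is a geodesic with speed `L` if `L > 0` and
every `t ∈ [0,1]` has a neighborhood `U ⊆ ℝ` on which `γ` is a local isometry up to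
the factor `L`: `dist (γ s) (γ s') = L * |s - s'|` for `s, s' ∈ U ∩ [0,1]`. -/
def IsGeodesicWithSpeed {X : Type*} [MetricSpace X] (γ : ℝ → X) (L : ℝ) : Prop :=
  0 < L ∧ ∀ t ∈ Set.Icc (0:ℝ) 1, ∃ U ∈ nhds t,
    ∀ s ∈ U ∩ Set.Icc (0:ℝ) 1, ∀ s' ∈ U ∩ Set.Icc (0:ℝ) 1,
      dist (γ s) (γ s') = L * |s - s'|

/-- A geodesic is a map with some positive speed. -/
def IsGeodesic {X : Type*} [MetricSpace X] (γ : ℝ → X) : Prop :=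
  ∃ L : ℝ, IsGeodesicWithSpeed γ L

/-- `B` is a blocking set for the configuration `(x, y)`: every geodesic joining `x` to `y`
has an interior point in `B`. -/
def Blocks {X : Type*} [MetricSpace X] (x y : X) (B : Set X) : Prop :=
  ∀ γ : ℝ → X, IsGeodesic γ → γ 0 = x → γ 1 = y → ∃ t ∈ Set.Ioo (0:ℝ) 1, γ t ∈ B

/-- The configuration `(x, y)` is secure: it has a finite blocking set. -/
def Secure {X : Type*} [MetricSpace X] (x y : X) : Prop :=
  ∃ B : Set X, B.Finite ∧ Blocks x y B

/-- `B` is a midpoint blocking set for `(x, y)`: every geodesic joining `x` to `y`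
has its midpoint in `B`. -/
def MidpointBlocks {X : Type*} [MetricSpace X] (x y : X) (B : Set X) : Prop :=
  ∀ γ : ℝ → X, IsGeodesic γ → γ 0 = x → γ 1 = y → γ (1/2 : ℝ) ∈ B

/-- The configuration `(x, y)` is midpoint secure: it has a finite midpoint blocking set. -/
def MidpointSecure {X : Type*} [MetricSpace X] (x y : X) : Prop :=
  ∃ B : Set X, B.Finite ∧ MidpointBlocks x y B

open Set
set_option maxHeartbeats 1000000
open scoped ENNReal

private lemma cs_eq {a a' b b' p q d1 d2 : ℝ}
    (ha : 0 ≤ a) (ha' : 0 ≤ a') (hb : 0 ≤ b) (hb' : 0 ≤ b')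
    (hd1 : 0 ≤ d1) (hd2 : 0 ≤ d2) (hp : 0 < p) (hq : 0 < q)
    (h1 : a^2 + a'^2 = p^2) (h2 : b^2 + b'^2 = q^2)
    (h3 : d1^2 + d2^2 = (p+q)^2) (h4 : d1 ≤ a + b) (h5 : d2 ≤ a' + b') :
    d1 = a + b ∧ a * q = p * b := by
  have hd1sq : d1^2 ≤ (a+b)^2 := by nlinarith
  have hd2sq : d2^2 ≤ (a'+b')^2 := by nlinarith
  have hS' : p*q ≤ a*b + a'*b' := by nlinarith
  have hS : a*b + a'*b' ≤ p*q := by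
    nlinarith [sq_nonneg (a*b' - a'*b), mul_nonneg ha hb, mul_nonneg ha' hb', mul_pos hp hq]
  have hSe : a*b + a'*b' = p*q := le_antisymm hS hS'
  have hz : (a*q - p*b)^2 + (a'*q - p*b')^2 = 0 := by
    linear_combination q^2 * h1 + p^2 * h2 - 2*p*q*hSe
  have h6' : (a*q - p*b)^2 = 0 :=
    le_antisymm (by nlinarith [sq_nonneg (a'*q - p*b')]) (sq_nonneg _)
  have h6 : a*q - p*b = 0 := by
    have := pow_eq_zero_iff (n := 2) (by norm_num) |>.1 h6'
    linarith
  constructor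
  · have hge : (a+b)^2 ≤ d1^2 := by nlinarith [hd2sq]
    have h7 := Real.sqrt_le_sqrt hge
    rw [Real.sqrt_sq (by positivity), Real.sqrt_sq hd1] at h7
    linarith
  · linarith


private lemma dist_sq_prod {X₁ X₂ : Type*} [MetricSpace X₁] [MetricSpace X₂]
    (f g : WithLp 2 (X₁ × X₂)) :
    dist f g ^ 2 = dist f.fst g.fst ^ 2 + dist f.snd g.snd ^ 2 := by
  have h := WithLp.prod_dist_eq_add (p := 2) (by norm_num) f g
  rw [show ((2:ℝ≥0∞).toReal) = 2 by norm_num] at h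
  rw [h, ← Real.rpow_natCast _ 2, ← Real.rpow_mul (by positivity)]
  norm_num

private lemma dist_fst_le {X₁ X₂ : Type*} [MetricSpace X₁] [MetricSpace X₂]
    (f g : WithLp 2 (X₁ × X₂)) : dist f.fst g.fst ≤ dist f g := by
  have h := dist_sq_prod f g
  have h2 : dist f.fst g.fst ^ 2 ≤ dist f g ^ 2 := by
    nlinarith [sq_nonneg (dist f.snd g.snd)]
  have h3 := Real.sqrt_le_sqrt h2
  rwa [Real.sqrt_sq dist_nonneg, Real.sqrt_sq dist_nonneg] at h3

-- pick two distinct points of `[0,1]` near `t`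
private lemma pick_pair {t ε : ℝ} (ht : t ∈ Icc (0:ℝ) 1) (hε : 0 < ε) :
    ∃ p q : ℝ, p ∈ Metric.ball t ε ∩ Icc (0:ℝ) 1 ∧ q ∈ Metric.ball t ε ∩ Icc (0:ℝ) 1 ∧ p < q := by
  obtain ⟨ht0, ht1⟩ := ht
  rcases le_or_gt t (1/2) with h | h
  · refine ⟨t, t + min (ε/2) (1/2), ⟨Metric.mem_ball_self hε, ht0, ht1⟩, ⟨?_, ?_, ?_⟩, ?_⟩
    · rw [Metric.mem_ball, Real.dist_eq, add_sub_cancel_left,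
        abs_of_nonneg (by positivity : (0:ℝ) ≤ min (ε/2) (1/2))]
      have := min_le_left (ε/2) (1/2)
      linarith
    · positivity
    · have := min_le_right (ε/2) (1/2); linarith
    · have : (0:ℝ) < min (ε/2) (1/2) := lt_min (by linarith) (by norm_num)
      linarith
  · refine ⟨t - min (ε/2) (1/2), t, ⟨?_, ?_, ?_⟩, ⟨Metric.mem_ball_self hε, ht0, ht1⟩, ?_⟩
    · rw [Metric.mem_ball, Real.dist_eq, sub_sub_cancel_left,
        abs_neg, abs_of_nonneg (by positivity : (0:ℝ) ≤ min (ε/2) (1/2))]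
      have := min_le_left (ε/2) (1/2)
      linarith
    · have := min_le_right (ε/2) (1/2); linarith
    · have : (0:ℝ) ≤ min (ε/2) (1/2) := le_min (by linarith) (by norm_num)
      linarith
    · have : (0:ℝ) < min (ε/2) (1/2) := lt_min (by linarith) (by norm_num)
      linarith

private lemma three_pt {X₁ X₂ : Type*} [MetricSpace X₁] [MetricSpace X₂]
    (γ : ℝ → WithLp 2 (X₁ × X₂)) {L : ℝ} (hL : 0 < L) {a b c : ℝ}
    (hab : a < b) (hbc : b < c)
    (h1 : dist (γ a) (γ b) = L * (b - a)) (h2 : dist (γ b) (γ c) = L * (c - b))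
    (h3 : dist (γ a) (γ c) = L * (c - a)) :
    dist (γ a).fst (γ c).fst = dist (γ a).fst (γ b).fst + dist (γ b).fst (γ c).fst ∧
    dist (γ a).fst (γ b).fst * (c - b) = dist (γ b).fst (γ c).fst * (b - a) := by
  have e1 : dist (γ a).fst (γ b).fst ^ 2 + dist (γ a).snd (γ b).snd ^ 2 = (L*(b-a))^2 := by
    rw [← dist_sq_prod, h1]
  have e2 : dist (γ b).fst (γ c).fst ^ 2 + dist (γ b).snd (γ c).snd ^ 2 = (L*(c-b))^2 := by
    rw [← dist_sq_prod, h2]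
  have e3 : dist (γ a).fst (γ c).fst ^ 2 + dist (γ a).snd (γ c).snd ^ 2
      = (L*(b-a) + L*(c-b))^2 := by
    rw [← dist_sq_prod, h3]; ring
  obtain ⟨hadd, hcross⟩ := cs_eq dist_nonneg dist_nonneg dist_nonneg dist_nonneg
    dist_nonneg dist_nonneg (mul_pos hL (by linarith)) (mul_pos hL (by linarith))
    e1 e2 e3 (dist_triangle _ _ _) (dist_triangle _ _ _)
  refine ⟨hadd, ?_⟩
  exact mul_left_cancel₀ hL.ne' (by linear_combination hcross)

private lemma slope_eq {X₁ X₂ : Type*} [MetricSpace X₁] [MetricSpace X₂]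
    (γ : ℝ → WithLp 2 (X₁ × X₂)) {L : ℝ} (hL : 0 < L) {V : Set ℝ}
    (hV : ∀ s ∈ V, ∀ s' ∈ V, dist (γ s) (γ s') = L * |s - s'|)
    {s s' p q : ℝ} (hs : s ∈ V) (hs' : s' ∈ V) (hp : p ∈ V) (hq : q ∈ V)
    (h1 : s < s') (h2 : p < q) :
    dist (γ s).fst (γ s').fst * (q - p) = dist (γ p).fst (γ q).fst * (s' - s) := by
  have hdist : ∀ a ∈ V, ∀ b ∈ V, a < b → dist (γ a) (γ b) = L * (b - a) := by
    intro a ha b hb hab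
    rw [hV a ha b hb, abs_of_neg (by linarith : a - b < 0)]; ring
  have tp : ∀ a b c : ℝ, a ∈ V → b ∈ V → c ∈ V → a < b → b < c →
      dist (γ a).fst (γ c).fst = dist (γ a).fst (γ b).fst + dist (γ b).fst (γ c).fst ∧
      dist (γ a).fst (γ b).fst * (c - b) = dist (γ b).fst (γ c).fst * (b - a) := by
    intro a b c ha hb hc hab hbc
    exact three_pt γ hL hab hbc (hdist a ha b hb hab) (hdist b hb c hc hbc)
      (hdist a ha c hc (hab.trans hbc))
  have extl : ∀ a ∈ V, ∀ u ∈ V, ∀ v ∈ V, a ≤ u → u < v →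
      dist (γ u).fst (γ v).fst * (v - a) = dist (γ a).fst (γ v).fst * (v - u) := by
    intro a ha u hu v hv hau huv
    rcases eq_or_lt_of_le hau with rfl | hau
    · ring
    · obtain ⟨hadd, hcross⟩ := tp a u v ha hu hv hau huv
      linear_combination (-(v-u))*hadd - hcross
  have extr : ∀ u ∈ V, ∀ v ∈ V, ∀ b ∈ V, u < v → v ≤ b →
      dist (γ u).fst (γ v).fst * (b - u) = dist (γ u).fst (γ b).fst * (v - u) := by
    intro u hu v hv b hb huv hvb
    rcases eq_or_lt_of_le hvb with rfl | hvb
    · ring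
    · obtain ⟨hadd, hcross⟩ := tp u v b hu hv hb huv hvb
      linear_combination (-(v-u))*hadd + hcross
  set α := min s p with hα
  set β := max s' q with hβ
  have hαV : α ∈ V := by
    rcases le_total s p with h | h
    · rw [hα, min_eq_left h]; exact hs
    · rw [hα, min_eq_right h]; exact hp
  have hβV : β ∈ V := by
    rcases le_total s' q with h | h
    · rw [hβ, max_eq_right h]; exact hq
    · rw [hβ, max_eq_left h]; exact hs'
  have hαs : α ≤ s := min_le_left _ _
  have hαp : α ≤ p := min_le_right _ _
  have hs'β : s' ≤ β := le_max_left _ _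
  have hqβ : q ≤ β := le_max_right _ _
  have key : ∀ u ∈ V, ∀ v ∈ V, u < v → α ≤ u → v ≤ β →
      dist (γ u).fst (γ v).fst * (β - α) = dist (γ α).fst (γ β).fst * (v - u) := by
    intro u hu v hv huv hαu hvβ
    have e1 := extl α hαV u hu v hv hαu huv
    have e2 := extr α hαV v hv β hβV (lt_of_le_of_lt hαu huv) hvβ
    have hvα : 0 < v - α := by linarith
    apply mul_right_cancel₀ hvα.ne'
    linear_combination (β-α)*e1 + (v-u)*e2
  have E := key s hs s' hs' h1 hαs hs'β
  have F := key p hp q hq h2 hαp hqβ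
  have hβα : 0 < β - α := by linarith
  apply mul_right_cancel₀ hβα.ne'
  linear_combination (q-p)*E - (s'-s)*F

private lemma fst_slope {X₁ X₂ : Type*} [MetricSpace X₁] [MetricSpace X₂]
    {γ : ℝ → WithLp 2 (X₁ × X₂)} {L : ℝ} (hγ : IsGeodesicWithSpeed γ L) :
    ∃ c : ℝ, 0 ≤ c ∧ c ≤ 1 ∧ ∀ t ∈ Icc (0:ℝ) 1, ∃ U ∈ nhds t,
      ∀ s ∈ U ∩ Icc (0:ℝ) 1, ∀ s' ∈ U ∩ Icc (0:ℝ) 1,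
        dist (γ s).fst (γ s').fst = c * L * |s - s'| ∧
        dist (γ s).snd (γ s').snd = Real.sqrt (1 - c^2) * L * |s - s'| := by
  obtain ⟨hL, hloc⟩ := hγ
  have locball : ∀ t ∈ Icc (0:ℝ) 1, ∃ ε > 0, ∀ s ∈ Metric.ball t ε ∩ Icc (0:ℝ) 1,
      ∀ s' ∈ Metric.ball t ε ∩ Icc (0:ℝ) 1, dist (γ s) (γ s') = L * |s - s'| := by
    intro t ht
    obtain ⟨U, hU, hprop⟩ := hloc t ht
    obtain ⟨ε, hε, hball⟩ := Metric.mem_nhds_iff.1 hU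
    exact ⟨ε, hε, fun s hs s' hs' => hprop s ⟨hball hs.1, hs.2⟩ s' ⟨hball hs'.1, hs'.2⟩⟩
  -- local slope constants
  have locc : ∀ t ∈ Icc (0:ℝ) 1, ∃ c : ℝ, 0 ≤ c ∧ c ≤ 1 ∧ ∃ ε > 0,
      ∀ s ∈ Metric.ball t ε ∩ Icc (0:ℝ) 1, ∀ s' ∈ Metric.ball t ε ∩ Icc (0:ℝ) 1,
        dist (γ s).fst (γ s').fst = c * L * |s - s'| := by
    intro t ht
    obtain ⟨ε, hε, hV⟩ := locball t ht
    obtain ⟨p, q, hp, hq, hpq⟩ := pick_pair ht hε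
    have hqp : (0:ℝ) < L * (q - p) := mul_pos hL (by linarith)
    have hdpq : dist (γ p) (γ q) = L * (q - p) := by
      rw [hV p hp q hq, abs_of_neg (by linarith : p - q < 0)]; ring
    refine ⟨dist (γ p).fst (γ q).fst / (L * (q - p)),
      div_nonneg dist_nonneg hqp.le, ?_, ε, hε, ?_⟩
    · rw [div_le_one hqp, ← hdpq]
      exact dist_fst_le _ _
    · intro s hs s' hs'
      rcases lt_trichotomy s s' with h | h | h
      · have hse := slope_eq γ hL hV hs hs' hp hq h hpq
        rw [abs_of_neg (by linarith : s - s' < 0), neg_sub]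
        rw [div_mul_eq_mul_div, div_mul_eq_mul_div, eq_div_iff hqp.ne']
        linear_combination L * hse
      · subst h; simp
      · have hse := slope_eq γ hL hV hs' hs hp hq h hpq
        rw [abs_of_pos (by linarith : (0:ℝ) < s - s'), dist_comm]
        rw [div_mul_eq_mul_div, div_mul_eq_mul_div, eq_div_iff hqp.ne']
        linear_combination L * hse
  -- globalize via local constancy
  let f : Icc (0:ℝ) 1 → ℝ := fun t => (locc t.1 t.2).choose
  have hf0 : ∀ t : Icc (0:ℝ) 1, 0 ≤ f t ∧ f t ≤ 1 ∧ ∃ ε > 0,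
      ∀ s ∈ Metric.ball t.1 ε ∩ Icc (0:ℝ) 1, ∀ s' ∈ Metric.ball t.1 ε ∩ Icc (0:ℝ) 1,
        dist (γ s).fst (γ s').fst = f t * L * |s - s'| := by
    intro t
    obtain ⟨h1, h2, h3⟩ := (locc t.1 t.2).choose_spec
    exact ⟨h1, h2, h3⟩
  have hlc : IsLocallyConstant f := by
    rw [IsLocallyConstant.iff_eventually_eq]
    intro x
    obtain ⟨ε, hε, hx⟩ := (hf0 x).2.2
    have hmem : Subtype.val ⁻¹' (Metric.ball (x:ℝ) ε) ∈ nhds x :=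
      continuous_subtype_val.continuousAt.preimage_mem_nhds (Metric.ball_mem_nhds _ hε)
    filter_upwards [hmem] with y hy
    obtain ⟨ε', hε', hy'⟩ := (hf0 y).2.2
    have hδ : (0:ℝ) < min ε' (ε - dist (y:ℝ) (x:ℝ)) := by
      refine lt_min hε' ?_
      have := hy
      rw [Set.mem_preimage, Metric.mem_ball] at this
      linarith
    obtain ⟨p, q, hp, hq, hpq⟩ := pick_pair y.2 hδ
    have hsub1 : Metric.ball (y:ℝ) (min ε' (ε - dist (y:ℝ) (x:ℝ))) ⊆ Metric.ball (y:ℝ) ε' :=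
      Metric.ball_subset_ball (min_le_left _ _)
    have hsub2 : Metric.ball (y:ℝ) (min ε' (ε - dist (y:ℝ) (x:ℝ))) ⊆ Metric.ball (x:ℝ) ε :=
      Metric.ball_subset_ball' (by linarith [min_le_right ε' (ε - dist (y:ℝ) (x:ℝ))])
    have h1 := hx p ⟨hsub2 hp.1, hp.2⟩ q ⟨hsub2 hq.1, hq.2⟩
    have h2 := hy' p ⟨hsub1 hp.1, hp.2⟩ q ⟨hsub1 hq.1, hq.2⟩
    have habs : |p - q| ≠ 0 := by
      rw [abs_of_neg (by linarith : p - q < 0)]; intro h; linarith [neg_eq_zero.mp h]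
    have := h2.symm.trans h1
    exact mul_right_cancel₀ hL.ne' (mul_right_cancel₀ habs this)
  haveI : PreconnectedSpace (Icc (0:ℝ) 1) := Subtype.preconnectedSpace isPreconnected_Icc
  have z01 : (0:ℝ) ∈ Icc (0:ℝ) 1 := by norm_num
  refine ⟨f ⟨0, z01⟩, (hf0 _).1, (hf0 _).2.1, ?_⟩
  intro t ht
  obtain ⟨ε1, hε1, hfst⟩ := (hf0 ⟨t, ht⟩).2.2
  obtain ⟨ε2, hε2, htot⟩ := locball t ht
  have hconst : f ⟨t, ht⟩ = f ⟨0, z01⟩ := hlc.apply_eq_of_preconnectedSpace _ _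
  set c := f ⟨0, z01⟩ with hc
  refine ⟨Metric.ball t (min ε1 ε2), Metric.ball_mem_nhds _ (lt_min hε1 hε2), ?_⟩
  intro s hs s' hs'
  have hs1 : s ∈ Metric.ball t ε1 ∩ Icc (0:ℝ) 1 :=
    ⟨Metric.ball_subset_ball (min_le_left _ _) hs.1, hs.2⟩
  have hs1' : s' ∈ Metric.ball t ε1 ∩ Icc (0:ℝ) 1 :=
    ⟨Metric.ball_subset_ball (min_le_left _ _) hs'.1, hs'.2⟩
  have hs2 : s ∈ Metric.ball t ε2 ∩ Icc (0:ℝ) 1 :=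
    ⟨Metric.ball_subset_ball (min_le_right _ _) hs.1, hs.2⟩
  have hs2' : s' ∈ Metric.ball t ε2 ∩ Icc (0:ℝ) 1 :=
    ⟨Metric.ball_subset_ball (min_le_right _ _) hs'.1, hs'.2⟩
  have hf1 : dist (γ s).fst (γ s').fst = c * L * |s - s'| := by
    rw [← hconst]; exact hfst s hs1 s' hs1'
  refine ⟨hf1, ?_⟩
  have hcc : 0 ≤ c := (hf0 _).1
  have hcc1 : c ≤ 1 := (hf0 _).2.1
  have h1c : 0 ≤ 1 - c^2 := by nlinarith
  have htots := htot s hs2 s' hs2'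
  have hsq := dist_sq_prod (γ s) (γ s')
  have hsnd : dist (γ s).snd (γ s').snd ^ 2 = (1 - c^2) * (L * |s - s'|)^2 := by
    rw [hf1] at hsq
    rw [htots] at hsq
    nlinarith [hsq]
  calc dist (γ s).snd (γ s').snd
      = Real.sqrt (dist (γ s).snd (γ s').snd ^ 2) := (Real.sqrt_sq dist_nonneg).symm
    _ = Real.sqrt ((1 - c^2) * (L * |s - s'|)^2) := by rw [hsnd]
    _ = Real.sqrt (1 - c^2) * (L * |s - s'|) := by
        rw [Real.sqrt_mul h1c, Real.sqrt_sq (by positivity)]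
    _ = Real.sqrt (1 - c^2) * L * |s - s'| := by ring

private lemma const_comp {X : Type*} [MetricSpace X] (g : ℝ → X)
    (h : ∀ t ∈ Icc (0:ℝ) 1, ∃ U ∈ nhds t, ∀ s ∈ U ∩ Icc (0:ℝ) 1, ∀ s' ∈ U ∩ Icc (0:ℝ) 1,
      dist (g s) (g s') = 0) : g (1/2 : ℝ) = g 0 := by
  haveI : PreconnectedSpace (Icc (0:ℝ) 1) := Subtype.preconnectedSpace isPreconnected_Icc
  let G : Icc (0:ℝ) 1 → X := fun t => g t.1
  have hlc : IsLocallyConstant G := by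
    rw [IsLocallyConstant.iff_eventually_eq]
    intro x
    obtain ⟨U, hU, hprop⟩ := h x.1 x.2
    have hmem : Subtype.val ⁻¹' U ∈ nhds x :=
      continuous_subtype_val.continuousAt.preimage_mem_nhds hU
    filter_upwards [hmem] with y hy
    exact dist_eq_zero.mp (hprop y.1 ⟨hy, y.2⟩ x.1 ⟨mem_of_mem_nhds hU, x.2⟩)
  exact hlc.apply_eq_of_preconnectedSpace ⟨1/2, by norm_num⟩ ⟨0, by norm_num⟩


/-- The product of two midpoint secure configurations is midpoint secure, with midpoint
blocking set `(B₁ ∪ {x₁}) × (B₂ ∪ {x₂})`. -/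
theorem stmt7 {X₁ X₂ : Type*} [MetricSpace X₁] [MetricSpace X₂]
    (x₁ y₁ : X₁) (x₂ y₂ : X₂) (B₁ : Set X₁) (B₂ : Set X₂)
    (hB₁fin : B₁.Finite) (hB₂fin : B₂.Finite)
    (hB₁ : MidpointBlocks x₁ y₁ B₁) (hB₂ : MidpointBlocks x₂ y₂ B₂) :
    MidpointSecure ((WithLp.equiv 2 (X₁ × X₂)).symm (x₁, x₂))
      ((WithLp.equiv 2 (X₁ × X₂)).symm (y₁, y₂)) ∧
    ((WithLp.equiv 2 (X₁ × X₂)).symm '' ((B₁ ∪ {x₁}) ×ˢ (B₂ ∪ {x₂}))).Finite ∧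
    MidpointBlocks ((WithLp.equiv 2 (X₁ × X₂)).symm (x₁, x₂))
      ((WithLp.equiv 2 (X₁ × X₂)).symm (y₁, y₂))
      ((WithLp.equiv 2 (X₁ × X₂)).symm '' ((B₁ ∪ {x₁}) ×ˢ (B₂ ∪ {x₂}))) := by
  have hfin : ((WithLp.equiv 2 (X₁ × X₂)).symm '' ((B₁ ∪ {x₁}) ×ˢ (B₂ ∪ {x₂}))).Finite :=
    (((hB₁fin.union (Set.finite_singleton x₁)).prod
      (hB₂fin.union (Set.finite_singleton x₂)))).image _
  have key : MidpointBlocks ((WithLp.equiv 2 (X₁ × X₂)).symm (x₁, x₂))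
      ((WithLp.equiv 2 (X₁ × X₂)).symm (y₁, y₂))
      ((WithLp.equiv 2 (X₁ × X₂)).symm '' ((B₁ ∪ {x₁}) ×ˢ (B₂ ∪ {x₂}))) := by
    intro γ hγ h0 h1
    obtain ⟨L, hγL⟩ := hγ
    have hL := hγL.1
    obtain ⟨c, hc0, hc1, hmain⟩ := fst_slope hγL
    have h0fst : (γ 0).fst = x₁ := by rw [h0]; rfl
    have h1fst : (γ 1).fst = y₁ := by rw [h1]; rfl
    have h0snd : (γ 0).snd = x₂ := by rw [h0]; rfl
    have h1snd : (γ 1).snd = y₂ := by rw [h1]; rfl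
    have hm1 : (γ (1/2:ℝ)).fst ∈ B₁ ∪ {x₁} := by
      rcases hc0.lt_or_eq with hcpos | hczero
      · left
        have hg1 : IsGeodesicWithSpeed (fun t => (γ t).fst) (c * L) := by
          refine ⟨mul_pos hcpos hL, fun t ht => ?_⟩
          obtain ⟨U, hU, hp⟩ := hmain t ht
          exact ⟨U, hU, fun s hs s' hs' => (hp s hs s' hs').1⟩
        exact hB₁ (fun t => (γ t).fst) ⟨c * L, hg1⟩ h0fst h1fst
      · right
        have hconst : (γ (1/2:ℝ)).fst = (γ 0).fst := by
          refine const_comp (fun t => (γ t).fst) ?_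
          intro t ht
          obtain ⟨U, hU, hp⟩ := hmain t ht
          refine ⟨U, hU, fun s hs s' hs' => ?_⟩
          rw [(hp s hs s' hs').1, ← hczero]; ring
        rw [hconst, h0fst]; rfl
    have hm2 : (γ (1/2:ℝ)).snd ∈ B₂ ∪ {x₂} := by
      rcases (Real.sqrt_nonneg (1 - c^2)).lt_or_eq with hcpos | hczero
      · left
        have hg2 : IsGeodesicWithSpeed (fun t => (γ t).snd) (Real.sqrt (1 - c^2) * L) := by
          refine ⟨mul_pos hcpos hL, fun t ht => ?_⟩
          obtain ⟨U, hU, hp⟩ := hmain t ht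
          exact ⟨U, hU, fun s hs s' hs' => (hp s hs s' hs').2⟩
        exact hB₂ (fun t => (γ t).snd) ⟨Real.sqrt (1 - c^2) * L, hg2⟩ h0snd h1snd
      · right
        have hconst : (γ (1/2:ℝ)).snd = (γ 0).snd := by
          refine const_comp (fun t => (γ t).snd) ?_
          intro t ht
          obtain ⟨U, hU, hp⟩ := hmain t ht
          refine ⟨U, hU, fun s hs s' hs' => ?_⟩
          rw [(hp s hs s' hs').2, ← hczero]; ring
        rw [hconst, h0snd]; rfl
    exact ⟨((γ (1/2:ℝ)).fst, (γ (1/2:ℝ)).snd), Set.mk_mem_prod hm1 hm2, rfl⟩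
  exact ⟨⟨_, hfin, key⟩, hfin, key⟩
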